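/- The function f₂(φ) = Σ_{i=1}^r ( log(max{1, λ_i*(φ)}) − max{1, λ_i*(φ)} + 1 ), where λ₁*(φ) ≥ ⋯ ≥ λ_p*(φ) are the eigenvalues of Diag(φ)^{1/2} S Diag(φ)^{1/2} for a fixed positive semidefinite matrix S, is concave on the set of vectors φ ∈ ℝ^p with strictly positive entries (equivalently, −f₂ is convex). -/

import Mathlib

open Matrix Real Finset

/- ### Auxiliary scalar lemmas -/

private lemma aux_log_ineq (t s' : ℝ) (h0 : 0 ≤ s') (h1 : s' < 1) :
    Real.log (max 1 t) - max 1 t + 1 ≤ -(s' * t) - Real.log (1 - s') := by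
  set m := max 1 t with hm
  have hm1 : (1:ℝ) ≤ m := le_max_left _ _
  have hmpos : (0:ℝ) < m := lt_of_lt_of_le one_pos hm1
  have htm : t ≤ m := le_max_right _ _
  have hs : (0:ℝ) < 1 - s' := by linarith
  have key : Real.log m + Real.log (1 - s') ≤ m * (1 - s') - 1 := by
    have h := Real.log_le_sub_one_of_pos (mul_pos hmpos hs)
    rwa [Real.log_mul hmpos.ne' hs.ne'] at h
  have hst : s' * t ≤ s' * m := mul_le_mul_of_nonneg_left htm h0
  have expand : m * (1 - s') = m - s' * m := by ring
  linarith

private lemma aux_log_eq (t : ℝ) :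
    Real.log (max 1 t) - max 1 t + 1
      = -((1 - (max 1 t)⁻¹) * t) - Real.log (1 - (1 - (max 1 t)⁻¹)) := by
  set m := max 1 t with hm
  have hm1 : (1:ℝ) ≤ m := le_max_left _ _
  have hmpos : (0:ℝ) < m := lt_of_lt_of_le one_pos hm1
  have h2 : (1:ℝ) - (1 - m⁻¹) = m⁻¹ := by ring
  rw [h2, Real.log_inv]
  have hkey : (1 - m⁻¹) * t = m - 1 := by
    by_cases h : t ≤ 1
    · have : m = 1 := max_eq_left h
      rw [this]; simp
    · have h1t : (1:ℝ) ≤ t := le_of_lt (not_le.mp h)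
      have : m = t := max_eq_right h1t
      rw [this]
      have ht0 : t ≠ 0 := by linarith
      field_simp
  linarith [hkey]

/- ### Auxiliary majorization lemmas -/

private lemma aux_c {p : ℕ} (lam c : Fin p → ℝ) (k : Fin p)
    (hldec : ∀ i j : Fin p, i ≤ j → lam j ≤ lam i)
    (hc0 : ∀ j, 0 ≤ c j) (hc1 : ∀ j, c j ≤ 1)
    (hsum : ∑ j, c j = ((Finset.Iic k).card : ℝ)) :
    ∑ j, lam j * c j ≤ ∑ j ∈ Finset.Iic k, lam j := by
  classical
  have split : ∑ j ∈ Finset.Iic k, lam j * c j + ∑ j ∈ (Finset.Iic k)ᶜ, lam j * c j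
      = ∑ j, lam j * c j := Finset.sum_add_sum_compl _ _
  have splitc : ∑ j ∈ Finset.Iic k, c j + ∑ j ∈ (Finset.Iic k)ᶜ, c j
      = ∑ j, c j := Finset.sum_add_sum_compl _ _
  have h1 : ∑ j ∈ Finset.Iic k, lam j * c j
      ≤ ∑ j ∈ Finset.Iic k, (lam j + lam k * (c j - 1)) := by
    apply Finset.sum_le_sum
    intro j hj
    have hjk : j ≤ k := Finset.mem_Iic.mp hj
    have hmul : lam j * (c j - 1) ≤ lam k * (c j - 1) :=
      mul_le_mul_of_nonpos_right (hldec j k hjk) (by linarith [hc1 j])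
    nlinarith [hmul]
  have h2 : ∑ j ∈ (Finset.Iic k)ᶜ, lam j * c j ≤ ∑ j ∈ (Finset.Iic k)ᶜ, lam k * c j := by
    apply Finset.sum_le_sum
    intro j hj
    have hkj : k ≤ j := by
      have : ¬ j ≤ k := by simpa [Finset.mem_compl, Finset.mem_Iic] using hj
      exact le_of_lt (not_le.mp this)
    exact mul_le_mul_of_nonneg_right (hldec k j hkj) (hc0 j)
  have e1 : ∑ j ∈ Finset.Iic k, (lam j + lam k * (c j - 1))
      = ∑ j ∈ Finset.Iic k, lam j
        + (lam k * ∑ j ∈ Finset.Iic k, c j - lam k * ((Finset.Iic k).card : ℝ)) := by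
    rw [Finset.sum_add_distrib, ← Finset.mul_sum, Finset.sum_sub_distrib,
      Finset.sum_const, nsmul_eq_mul, mul_one, mul_sub]
  have e2 : ∑ j ∈ (Finset.Iic k)ᶜ, lam k * c j = lam k * ∑ j ∈ (Finset.Iic k)ᶜ, c j :=
    (Finset.mul_sum _ _ _).symm
  have hmulsum : lam k * (∑ j ∈ Finset.Iic k, c j) + lam k * (∑ j ∈ (Finset.Iic k)ᶜ, c j)
      = lam k * ((Finset.Iic k).card : ℝ) := by
    rw [← mul_add, splitc, hsum]
  linarith [h1, h2, e1, e2, hmulsum, split]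

private lemma aux_kyfan {p : ℕ} (s lam : Fin p → ℝ) (d : Fin p → Fin p → ℝ)
    (hs0 : ∀ i, 0 ≤ s i) (hsdec : ∀ i j : Fin p, i ≤ j → s j ≤ s i)
    (hldec : ∀ i j : Fin p, i ≤ j → lam j ≤ lam i)
    (hd0 : ∀ i j, 0 ≤ d i j) (hrow : ∀ i, ∑ j, d i j = 1) (hcol : ∀ j, ∑ i, d i j = 1) :
    ∑ i, s i * (∑ j, lam j * d i j) ≤ ∑ i, s i * lam i := by
  classical
  set sN : ℕ → ℝ := fun n => if h : n < p then s ⟨n, h⟩ else 0 with hsN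
  set α : Fin p → ℝ := fun k => s k - sN ((k : ℕ) + 1) with hα
  have hα0 : ∀ k, 0 ≤ α k := by
    intro k
    simp only [hα, hsN]
    split_ifs with h
    · have hk : k ≤ (⟨(k : ℕ) + 1, h⟩ : Fin p) := by
        simp [Fin.le_def]
      linarith [hsdec k ⟨(k : ℕ) + 1, h⟩ hk]
    · simpa using hs0 k
  have hIic : ∀ k : Fin p, Finset.Iic k = Finset.univ.filter (fun i => i ≤ k) := by
    intro k; ext i; simp
  have key : ∀ t : Fin p → ℝ,
      ∑ i, s i * t i = ∑ k, α k * ∑ i ∈ Finset.Iic k, t i := by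
    intro t
    have hrep : ∀ i : Fin p, s i = ∑ k, if i ≤ k then α k else 0 := by
      intro i
      have h1 : ∑ k : Fin p, (if i ≤ k then α k else 0)
          = ∑ n ∈ Finset.range p, (if (i : ℕ) ≤ n then sN n - sN (n + 1) else 0) := by
        rw [Finset.sum_range]
        apply Finset.sum_congr rfl
        intro k _
        have : sN (k : ℕ) = s k := by simp [hsN, k.2]
        simp only [hα, Fin.le_def, ← this]
      have h2 : (Finset.range p).filter (fun n => (i : ℕ) ≤ n) = Finset.Ico (i : ℕ) p := by
        ext n; simp [Finset.mem_Ico, Finset.mem_filter, Finset.mem_range]; tauto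
      have h3 : ∑ n ∈ Finset.range p, (if (i : ℕ) ≤ n then sN n - sN (n + 1) else 0)
          = ∑ n ∈ Finset.Ico (i : ℕ) p, (sN n - sN (n + 1)) := by
        rw [← Finset.sum_filter, h2]
      have h4 : ∑ n ∈ Finset.Ico (i : ℕ) p, (sN n - sN (n + 1)) = sN (i : ℕ) - sN p := by
        rw [Finset.sum_Ico_eq_sub _ i.2.le, Finset.sum_range_sub' sN, Finset.sum_range_sub' sN]
        ring
      have h5 : sN p = 0 := by simp [hsN]
      have h6 : sN (i : ℕ) = s i := by simp [hsN, i.2]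
      rw [h1, h3, h4, h5, h6, sub_zero]
    calc ∑ i, s i * t i = ∑ i, (∑ k, if i ≤ k then α k else 0) * t i := by
          apply Finset.sum_congr rfl; intro i _; rw [← hrep i]
      _ = ∑ i, ∑ k, (if i ≤ k then α k * t i else 0) := by
          apply Finset.sum_congr rfl; intro i _
          rw [Finset.sum_mul]
          apply Finset.sum_congr rfl; intro k _
          rw [ite_mul, zero_mul]
      _ = ∑ k, ∑ i, (if i ≤ k then α k * t i else 0) := Finset.sum_comm
      _ = ∑ k, α k * ∑ i ∈ Finset.Iic k, t i := by
          apply Finset.sum_congr rfl; intro k _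
          rw [← Finset.sum_filter, ← hIic k, Finset.mul_sum]
  rw [key (fun i => ∑ j, lam j * d i j), key lam]
  apply Finset.sum_le_sum
  intro k _
  apply mul_le_mul_of_nonneg_left _ (hα0 k)
  have swap : ∑ i ∈ Finset.Iic k, (∑ j, lam j * d i j)
      = ∑ j, lam j * (∑ i ∈ Finset.Iic k, d i j) := by
    rw [Finset.sum_comm]
    apply Finset.sum_congr rfl; intro j _
    rw [Finset.mul_sum]
  rw [swap]
  apply aux_c lam (fun j => ∑ i ∈ Finset.Iic k, d i j) k hldec
  · intro j
    exact Finset.sum_nonneg fun i _ => hd0 i j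
  · intro j
    calc ∑ i ∈ Finset.Iic k, d i j ≤ ∑ i, d i j :=
          Finset.sum_le_sum_of_subset_of_nonneg (Finset.subset_univ _)
            (fun i _ _ => hd0 i j)
      _ = 1 := hcol j
  · rw [Finset.sum_comm]
    rw [Finset.sum_congr rfl (fun i _ => hrow i), Finset.sum_const, nsmul_eq_mul, mul_one]

/- ### Auxiliary matrix lemmas -/

private lemma aux_sandwich {p : ℕ} (V M : Matrix (Fin p) (Fin p) ℝ) (h : V * Vᵀ = 1) :
    V * (Vᵀ * M * V) * Vᵀ = M := by
  calc V * (Vᵀ * M * V) * Vᵀ = (V * Vᵀ) * M * (V * Vᵀ) := by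
        simp only [Matrix.mul_assoc]
    _ = M := by rw [h, one_mul, mul_one]

/-- From an orthogonal eigendecomposition of `D^{1/2} S D^{1/2}` we obtain an orthogonal
diagonalization, with the same eigenvalues, of `√S * Diag φ * √S`, which is linear in `φ`. -/
private lemma exists_orth_diag {p : ℕ} (R : Matrix (Fin p) (Fin p) ℝ) (hR : Rᵀ = R)
    (φ lamφ : Fin p → ℝ) (hφ : ∀ i, 0 < φ i)
    (U : Matrix (Fin p) (Fin p) ℝ) (hU1 : U * Uᵀ = 1) (hU2 : Uᵀ * U = 1)
    (hM : Matrix.diagonal (fun i => Real.sqrt (φ i)) * (R * R) *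
          Matrix.diagonal (fun i => Real.sqrt (φ i)) = U * Matrix.diagonal lamφ * Uᵀ) :
    ∃ V : Matrix (Fin p) (Fin p) ℝ, Vᵀ * V = 1 ∧ V * Vᵀ = 1 ∧
      Vᵀ * (R * Matrix.diagonal φ * R) * V = Matrix.diagonal lamφ := by
  classical
  set Dh := Matrix.diagonal (fun i => Real.sqrt (φ i)) with hDh
  have hDhT : Dhᵀ = Dh := Matrix.diagonal_transpose _
  have hDh2 : Dh * Dh = Matrix.diagonal φ := by
    rw [hDh, Matrix.diagonal_mul_diagonal]
    exact congrArg Matrix.diagonal (funext fun i => Real.mul_self_sqrt (hφ i).le)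
  set C := R * Dh * U with hC
  have hCT : Cᵀ = Uᵀ * Dh * R := by
    rw [hC, Matrix.transpose_mul, Matrix.transpose_mul, hDhT, hR, Matrix.mul_assoc]
  have hCtC : Cᵀ * C = Matrix.diagonal lamφ := by
    rw [hCT, hC]
    calc Uᵀ * Dh * R * (R * Dh * U) = Uᵀ * (Dh * (R * R) * Dh) * U := by
          simp only [Matrix.mul_assoc]
      _ = Uᵀ * (U * Matrix.diagonal lamφ * Uᵀ) * U := by rw [hM]
      _ = (Uᵀ * U) * Matrix.diagonal lamφ * (Uᵀ * U) := by simp only [Matrix.mul_assoc]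
      _ = Matrix.diagonal lamφ := by rw [hU2, one_mul, mul_one]
  have hCCt : C * Cᵀ = R * Matrix.diagonal φ * R := by
    rw [hCT, hC]
    calc R * Dh * U * (Uᵀ * Dh * R) = R * Dh * (U * Uᵀ) * (Dh * R) := by
          simp only [Matrix.mul_assoc]
      _ = R * (Dh * Dh) * R := by rw [hU1]; simp only [Matrix.mul_one, Matrix.mul_assoc]
      _ = R * Matrix.diagonal φ * R := by rw [hDh2]
  have hdiagsq : ∀ i, lamφ i = ∑ k, C k i * C k i := by
    intro i
    have h := congrFun (congrFun hCtC i) i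
    rw [Matrix.diagonal_apply_eq] at h
    rw [← h, Matrix.mul_apply]
    apply Finset.sum_congr rfl
    intro k _
    rw [Matrix.transpose_apply]
  have hlam0 : ∀ i, 0 ≤ lamφ i := by
    intro i
    rw [hdiagsq i]
    exact Finset.sum_nonneg fun k _ => mul_self_nonneg _
  set col : Fin p → EuclideanSpace ℝ (Fin p) := fun i => WithLp.toLp 2 (fun k => C k i) with hcol
  have hinner : ∀ i j, inner ℝ (col i) (col j) = (if i = j then lamφ i else 0 : ℝ) := by
    intro i j
    have h := congrFun (congrFun hCtC i) j
    rw [Matrix.diagonal_apply] at h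
    rw [← h, Matrix.mul_apply]
    simp only [PiLp.inner_apply, RCLike.inner_apply, starRingEnd_apply, star_trivial]
    apply Finset.sum_congr rfl
    intro k _
    exact mul_comm _ _
  set T : Set (Fin p) := {i | lamφ i ≠ 0} with hT
  set v : Fin p → EuclideanSpace ℝ (Fin p) :=
    fun i => (Real.sqrt (lamφ i))⁻¹ • col i with hv
  have horth : Orthonormal ℝ (T.restrict v) := by
    rw [orthonormal_iff_ite]
    rintro ⟨i, hi⟩ ⟨j, hj⟩
    simp only [Set.restrict_apply, Set.restrict, hv]
    rw [inner_smul_left, inner_smul_right, hinner i j]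
    by_cases hij : i = j
    · subst hij
      have hlpos : 0 < lamφ i := lt_of_le_of_ne (hlam0 i) (Ne.symm hi)
      have hs : Real.sqrt (lamφ i) ≠ 0 := by positivity
      have hmain : (Real.sqrt (lamφ i))⁻¹ * ((Real.sqrt (lamφ i))⁻¹ * lamφ i) = 1 := by
        rw [← mul_assoc, ← mul_inv, Real.mul_self_sqrt hlpos.le, inv_mul_cancel₀ hlpos.ne']
      simp only [if_pos rfl, starRingEnd_apply, star_trivial]
      simpa using hmain
    · simp [hij, Subtype.mk.injEq]
  obtain ⟨b, hb⟩ := horth.exists_orthonormalBasis_extension_of_card_eq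
    (by simp [finrank_euclideanSpace])
  set V : Matrix (Fin p) (Fin p) ℝ := Matrix.of (fun k i => b i k) with hV
  have hbsum : ∀ i j, ∑ k, b i k * b j k = (if i = j then 1 else 0 : ℝ) := by
    intro i j
    have h := orthonormal_iff_ite.mp b.orthonormal i j
    rw [← h]
    simp only [PiLp.inner_apply, RCLike.inner_apply, starRingEnd_apply, star_trivial]
    exact Finset.sum_congr rfl fun k _ => mul_comm _ _
  have hVtV : Vᵀ * V = 1 := by
    ext i j
    rw [Matrix.mul_apply, Matrix.one_apply]
    simp only [hV, Matrix.transpose_apply, Matrix.of_apply]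
    exact hbsum i j
  have hVVt : V * Vᵀ = 1 := mul_eq_one_comm.mp hVtV
  have hCtV : Cᵀ * V = Matrix.diagonal (fun i => Real.sqrt (lamφ i)) := by
    ext i j
    rw [Matrix.mul_apply, Matrix.diagonal_apply]
    simp only [hV, Matrix.transpose_apply, Matrix.of_apply]
    by_cases hi : lamφ i = 0
    · have hci : ∀ k, C k i = 0 := by
        intro k
        have hz : ∑ k, C k i * C k i = 0 := by rw [← hdiagsq i, hi]
        have := (Finset.sum_eq_zero_iff_of_nonneg
          (fun k _ => mul_self_nonneg (C k i))).mp hz k (Finset.mem_univ k)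
        exact mul_self_eq_zero.mp this
      simp [hci, hi]
    · have hbi : b i = v i := hb i hi
      have hlpos : 0 < lamφ i := lt_of_le_of_ne (hlam0 i) (Ne.symm hi)
      have hs : Real.sqrt (lamφ i) ≠ 0 := by positivity
      have hCk : ∀ k, C k i = Real.sqrt (lamφ i) * b i k := by
        intro k
        rw [hbi]
        show C k i = Real.sqrt (lamφ i) * ((Real.sqrt (lamφ i))⁻¹ * C k i)
        field_simp
      calc ∑ k, C k i * b j k = ∑ k, Real.sqrt (lamφ i) * (b i k * b j k) := by
            apply Finset.sum_congr rfl
            intro k _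
            rw [hCk k]; ring
        _ = Real.sqrt (lamφ i) * ∑ k, b i k * b j k := by rw [Finset.mul_sum]
        _ = (if i = j then Real.sqrt (lamφ i) else 0) := by
            rw [hbsum i j]; split_ifs <;> simp
  have hVtC : Vᵀ * C = Matrix.diagonal (fun i => Real.sqrt (lamφ i)) := by
    have := congrArg Matrix.transpose hCtV
    rwa [Matrix.transpose_mul, Matrix.transpose_transpose, Matrix.diagonal_transpose] at this
  refine ⟨V, hVtV, hVVt, ?_⟩
  rw [← hCCt]
  calc Vᵀ * (C * Cᵀ) * V = (Vᵀ * C) * (Cᵀ * V) := by simp only [Matrix.mul_assoc]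
    _ = Matrix.diagonal lamφ := by
        rw [hVtC, hCtV, Matrix.diagonal_mul_diagonal]
        exact congrArg Matrix.diagonal (funext fun i => Real.mul_self_sqrt (hlam0 i))

/-- concavity of `f₂` in the concentrated Gaussian FA objective.
For a fixed positive semidefinite `S`, `lam φ` lists (in decreasing order) the
eigenvalues of `Diag(φ)^{1/2} S Diag(φ)^{1/2}` for every `φ` in the positive
orthant (expressed via an orthogonal eigendecomposition).  Then
`f₂(φ) = ∑_{i<r} (log (max 1 (lam φ i)) - max 1 (lam φ i) + 1)` is concave on
the positive orthant, i.e. `-f₂` is convex. -/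
theorem fa_f2_concave
    (p r : ℕ) (hr : r ≤ p)
    (S : Matrix (Fin p) (Fin p) ℝ) (hS : S.PosSemidef)
    (lam : (Fin p → ℝ) → Fin p → ℝ)
    (hlam : ∀ φ : Fin p → ℝ, (∀ i, 0 < φ i) →
      (∃ U : Matrix (Fin p) (Fin p) ℝ, U * Uᵀ = 1 ∧ Uᵀ * U = 1 ∧
        Matrix.diagonal (fun i => Real.sqrt (φ i)) * S *
            Matrix.diagonal (fun i => Real.sqrt (φ i)) =
          U * Matrix.diagonal (lam φ) * Uᵀ) ∧
      (∀ i j : Fin p, i ≤ j → lam φ j ≤ lam φ i)) :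
    ConcaveOn ℝ {φ : Fin p → ℝ | ∀ i, 0 < φ i}
      (fun φ => ∑ i ∈ Finset.univ.filter (fun i : Fin p => (i : ℕ) < r),
        (Real.log (max 1 (lam φ i)) - max 1 (lam φ i) + 1)) := by
  classical
  open scoped MatrixOrder in
  set R := CFC.sqrt S with hRdef
  open scoped MatrixOrder in
  have hRR : R * R = S := CFC.sqrt_mul_sqrt_self S hS.nonneg
  have hRT : Rᵀ = R := by
    open scoped MatrixOrder in
    have h : Rᴴ = R := (CFC.sqrt_nonneg S).posSemidef.isHermitian
    rwa [Matrix.conjTranspose_eq_transpose_of_trivial] at h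
  have hcomb : ∀ (x y : Fin p → ℝ), (∀ i, 0 < x i) → (∀ i, 0 < y i) →
      ∀ (a b : ℝ), 0 ≤ a → 0 ≤ b → a + b = 1 → ∀ i, 0 < (a • x + b • y) i := by
    intro x y hx hy a b ha hb hab i
    simp only [Pi.add_apply, Pi.smul_apply, smul_eq_mul]
    rcases eq_or_lt_of_le ha with h | h
    · have hb1 : b = 1 := by linarith
      rw [← h, hb1]
      simpa using hy i
    · have h1 : 0 < a * x i := mul_pos h (hx i)
      have h2 : 0 ≤ b * y i := mul_nonneg hb (hy i).le
      linarith
  constructor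
  · intro x hx y hy a b ha hb hab
    exact hcomb x y hx hy a b ha hb hab
  · intro x hx y hy a b ha hb hab
    dsimp only
    simp only [smul_eq_mul]
    set z := a • x + b • y with hzdef
    have hz : ∀ i, 0 < z i := hcomb x y hx hy a b ha hb hab
    obtain ⟨⟨Ux, hUx1, hUx2, hMx⟩, hdx⟩ := hlam x hx
    obtain ⟨⟨Uy, hUy1, hUy2, hMy⟩, hdy⟩ := hlam y hy
    obtain ⟨⟨Uz, hUz1, hUz2, hMz⟩, hdz⟩ := hlam z hz
    rw [← hRR] at hMx hMy hMz
    obtain ⟨Vx, hVx1, hVx2, hVxD⟩ := exists_orth_diag R hRT x (lam x) hx Ux hUx1 hUx2 hMx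
    obtain ⟨Vy, hVy1, hVy2, hVyD⟩ := exists_orth_diag R hRT y (lam y) hy Uy hUy1 hUy2 hMy
    obtain ⟨Vz, hVz1, hVz2, hVzD⟩ := exists_orth_diag R hRT z (lam z) hz Uz hUz1 hUz2 hMz
    set F := Finset.univ.filter (fun i : Fin p => (i : ℕ) < r) with hF
    set s : Fin p → ℝ :=
      fun i => if (i : ℕ) < r then 1 - (max 1 (lam z i))⁻¹ else 0 with hs
    have hm1 : ∀ t : ℝ, (1:ℝ) ≤ max 1 t := fun t => le_max_left _ _
    have hmpos : ∀ t : ℝ, (0:ℝ) < max 1 t := fun t => lt_of_lt_of_le one_pos (hm1 t)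
    have hs0 : ∀ i, 0 ≤ s i := by
      intro i
      rw [hs]
      dsimp only
      split_ifs with h
      · have h2 : (max 1 (lam z i))⁻¹ ≤ 1 := inv_le_one_of_one_le₀ (hm1 _)
        linarith
      · exact le_refl 0
    have hs1 : ∀ i, s i < 1 := by
      intro i
      rw [hs]
      dsimp only
      split_ifs with h
      · have h2 : (0:ℝ) < (max 1 (lam z i))⁻¹ := inv_pos.mpr (hmpos _)
        linarith
      · exact one_pos
    have hsval : ∀ i : Fin p, (i : ℕ) < r → s i = 1 - (max 1 (lam z i))⁻¹ := by
      intro i hi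
      rw [hs]
      exact if_pos hi
    have hsnot : ∀ i : Fin p, ¬ (i : ℕ) < r → s i = 0 := by
      intro i hi
      rw [hs]
      exact if_neg hi
    have hsdec : ∀ i j : Fin p, i ≤ j → s j ≤ s i := by
      intro i j hij
      by_cases hj : (j : ℕ) < r
      · have hi : (i : ℕ) < r := lt_of_le_of_lt (by exact_mod_cast hij) hj
        rw [hsval i hi, hsval j hj]
        have hlz : lam z j ≤ lam z i := hdz i j hij
        have hmax : max 1 (lam z j) ≤ max 1 (lam z i) := max_le_max (le_refl 1) hlz
        have hinv : (max 1 (lam z i))⁻¹ ≤ (max 1 (lam z j))⁻¹ :=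
          inv_anti₀ (hmpos _) hmax
        linarith
      · rw [hsnot j hj]
        exact hs0 i
    have hmemF : ∀ i : Fin p, i ∈ F ↔ (i : ℕ) < r := by
      intro i; rw [hF]; simp
    set K := ∑ i ∈ F, Real.log (1 - s i) with hK
    -- upper bound by the affine-ish functional, for any positive φ
    have hbound : ∀ w : Fin p → ℝ,
        ∑ i ∈ F, (Real.log (max 1 (lam w i)) - max 1 (lam w i) + 1)
          ≤ -(∑ i, s i * lam w i) - K := by
      intro w
      have step1 : ∑ i ∈ F, (Real.log (max 1 (lam w i)) - max 1 (lam w i) + 1)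
          ≤ ∑ i ∈ F, (-(s i * lam w i) - Real.log (1 - s i)) :=
        Finset.sum_le_sum fun i _ => aux_log_ineq (lam w i) (s i) (hs0 i) (hs1 i)
      have step2 : ∑ i ∈ F, (-(s i * lam w i) - Real.log (1 - s i))
          = -(∑ i ∈ F, s i * lam w i) - K := by
        rw [hK, Finset.sum_sub_distrib, Finset.sum_neg_distrib]
      have step3 : ∑ i ∈ F, s i * lam w i = ∑ i, s i * lam w i :=
        Finset.sum_subset (Finset.subset_univ F) fun i _ hi => by
          rw [hsnot i (fun h => hi ((hmemF i).mpr h)), zero_mul]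
      rw [step2, step3] at step1
      exact step1
    -- equality at z
    have heqz : ∑ i ∈ F, (Real.log (max 1 (lam z i)) - max 1 (lam z i) + 1)
        = -(∑ i, s i * lam z i) - K := by
      have step1 : ∑ i ∈ F, (Real.log (max 1 (lam z i)) - max 1 (lam z i) + 1)
          = ∑ i ∈ F, (-(s i * lam z i) - Real.log (1 - s i)) := by
        apply Finset.sum_congr rfl
        intro i hi
        rw [hsval i ((hmemF i).mp hi)]
        exact aux_log_eq (lam z i)
      have step2 : ∑ i ∈ F, (-(s i * lam z i) - Real.log (1 - s i))
          = -(∑ i ∈ F, s i * lam z i) - K := by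
        rw [hK, Finset.sum_sub_distrib, Finset.sum_neg_distrib]
      have step3 : ∑ i ∈ F, s i * lam z i = ∑ i, s i * lam z i :=
        Finset.sum_subset (Finset.subset_univ F) fun i _ hi => by
          rw [hsnot i (fun h => hi ((hmemF i).mpr h)), zero_mul]
      rw [step1, step2, step3]
    -- Ky Fan bound for w ∈ {x, y}
    have hKF : ∀ (w : Fin p → ℝ) (Vw : Matrix (Fin p) (Fin p) ℝ),
        (∀ i j : Fin p, i ≤ j → lam w j ≤ lam w i) →
        Vwᵀ * Vw = 1 → Vw * Vwᵀ = 1 →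
        Vwᵀ * (R * Matrix.diagonal w * R) * Vw = Matrix.diagonal (lam w) →
        ∑ i, s i * ((Vzᵀ * (R * Matrix.diagonal w * R) * Vz) i i) ≤ ∑ i, s i * lam w i := by
      intro w Vw hdw hVw1 hVw2 hVwD
      set W := Vzᵀ * Vw with hW
      have hXw : R * Matrix.diagonal w * R = Vw * Matrix.diagonal (lam w) * Vwᵀ := by
        rw [← hVwD, aux_sandwich _ _ hVw2]
      have hWWt : W * Wᵀ = 1 := by
        rw [hW, Matrix.transpose_mul, Matrix.transpose_transpose]
        have e : Vzᵀ * Vw * (Vwᵀ * Vz) = Vzᵀ * ((Vw * Vwᵀ) * Vz) := by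
          simp only [Matrix.mul_assoc]
        rw [e, hVw2, one_mul, hVz1]
      have hWtW : Wᵀ * W = 1 := mul_eq_one_comm.mp hWWt
      have hform : Vzᵀ * (R * Matrix.diagonal w * R) * Vz
          = W * Matrix.diagonal (lam w) * Wᵀ := by
        rw [hXw, hW, Matrix.transpose_mul, Matrix.transpose_transpose]
        simp only [Matrix.mul_assoc]
      have hentry : ∀ i, (Vzᵀ * (R * Matrix.diagonal w * R) * Vz) i i
          = ∑ j, lam w j * (W i j * W i j) := by
        intro i
        rw [hform, Matrix.mul_apply]
        apply Finset.sum_congr rfl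
        intro j _
        rw [Matrix.mul_diagonal, Matrix.transpose_apply]
        ring
      have hd0 : ∀ i j, 0 ≤ W i j * W i j := fun i j => mul_self_nonneg _
      have hrow : ∀ i, ∑ j, W i j * W i j = 1 := by
        intro i
        have h := congrFun (congrFun hWWt i) i
        rw [Matrix.mul_apply, Matrix.one_apply_eq] at h
        rw [← h]
        exact Finset.sum_congr rfl fun j _ => by rw [Matrix.transpose_apply]
      have hcol : ∀ j, ∑ i, W i j * W i j = 1 := by
        intro j
        have h := congrFun (congrFun hWtW j) j
        rw [Matrix.mul_apply, Matrix.one_apply_eq] at h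
        rw [← h]
        exact Finset.sum_congr rfl fun i _ => by rw [Matrix.transpose_apply]
      calc ∑ i, s i * ((Vzᵀ * (R * Matrix.diagonal w * R) * Vz) i i)
          = ∑ i, s i * (∑ j, lam w j * (W i j * W i j)) :=
            Finset.sum_congr rfl fun i _ => by rw [hentry i]
        _ ≤ ∑ i, s i * lam w i :=
            aux_kyfan s (lam w) (fun i j => W i j * W i j) hs0 hsdec hdw hd0 hrow hcol
    -- affine decomposition at z
    have haff : ∀ i, lam z i
        = a * ((Vzᵀ * (R * Matrix.diagonal x * R) * Vz) i i)
          + b * ((Vzᵀ * (R * Matrix.diagonal y * R) * Vz) i i) := by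
      intro i
      have hdz2 : Matrix.diagonal z = a • Matrix.diagonal x + b • Matrix.diagonal y := by
        rw [hzdef]
        ext i' j'
        by_cases h : i' = j' <;>
          simp [Matrix.diagonal_apply, h, Matrix.smul_apply, smul_eq_mul, Pi.add_apply,
            Pi.smul_apply]
      have hXz : R * Matrix.diagonal z * R
          = a • (R * Matrix.diagonal x * R) + b • (R * Matrix.diagonal y * R) := by
        rw [hdz2, Matrix.mul_add, Matrix.add_mul, Matrix.mul_smul, Matrix.mul_smul,
          Matrix.smul_mul, Matrix.smul_mul]
      have h1 : Vzᵀ * (R * Matrix.diagonal z * R) * Vz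
          = a • (Vzᵀ * (R * Matrix.diagonal x * R) * Vz)
            + b • (Vzᵀ * (R * Matrix.diagonal y * R) * Vz) := by
        rw [hXz, Matrix.mul_add, Matrix.add_mul, Matrix.mul_smul, Matrix.mul_smul,
          Matrix.smul_mul, Matrix.smul_mul]
      have h3 := congrFun (congrFun (hVzD.symm.trans h1) i) i
      simpa [Matrix.diagonal_apply_eq, Matrix.add_apply, Matrix.smul_apply, smul_eq_mul]
        using h3
    have hsumz : ∑ i, s i * lam z i
        = a * (∑ i, s i * ((Vzᵀ * (R * Matrix.diagonal x * R) * Vz) i i))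
          + b * (∑ i, s i * ((Vzᵀ * (R * Matrix.diagonal y * R) * Vz) i i)) := by
      calc ∑ i, s i * lam z i
          = ∑ i, (a * (s i * ((Vzᵀ * (R * Matrix.diagonal x * R) * Vz) i i))
              + b * (s i * ((Vzᵀ * (R * Matrix.diagonal y * R) * Vz) i i))) := by
            apply Finset.sum_congr rfl
            intro i _
            rw [haff i]
            ring
        _ = _ := by
            rw [Finset.sum_add_distrib, ← Finset.mul_sum, ← Finset.mul_sum]
    -- put everything together
    have hbx := hbound x
    have hby := hbound y
    have hkx := hKF x Vx hdx hVx1 hVx2 hVxD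
    have hky := hKF y Vy hdy hVy1 hVy2 hVyD
    have e3 := mul_le_mul_of_nonneg_left hbx ha
    have e4 := mul_le_mul_of_nonneg_left hby hb
    have e5 := mul_le_mul_of_nonneg_left hkx ha
    have e6 := mul_le_mul_of_nonneg_left hky hb
    have habK : a * K + b * K = K := by rw [← add_mul, hab, one_mul]
    nlinarith [e3, e4, e5, e6, heqz, hsumz, habK]
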